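/- Equivalence of weighted semi-norms: For any γ₁, γ₂ > 0 there exist constants c, C > 0 (depending on γ₁, γ₂ and the lattice Λ = AZ^m) such that c ‖Du‖_{ℓ²_{γ₂}} ≤ ‖Du‖_{ℓ²_{γ₁}} ≤ C ‖Du‖_{ℓ²_{γ₂}} for all u : Λ → R^d. -/

import Mathlib

open scoped BigOperators ENNReal

/-- Euclidean norm of a finite real vector. -/
noncomputable def vnorm {n : ℕ} (x : Fin n → ℝ) : ℝ := Real.sqrt (∑ i, (x i) ^ 2)

/-- The lattice point `A z ∈ ℝ^m` associated to the integer vector `z`. -/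
noncomputable def latPt {m : ℕ} (A : Matrix (Fin m) (Fin m) ℝ) (z : Fin m → ℤ) : Fin m → ℝ :=
  A.mulVec fun i => (z i : ℝ)

/-- `‖Du‖_{ℓ²_γ}` as an extended real number (so that no summability assumption
is needed). -/
noncomputable def normDE {m d : ℕ} (A : Matrix (Fin m) (Fin m) ℝ) (γ : ℝ)
    (u : (Fin m → ℤ) → Fin d → ℝ) : ℝ≥0∞ :=
  (∑' z : Fin m → ℤ, ∑' ζ : Fin m → ℤ,
    ENNReal.ofReal
      (Real.exp (-2 * γ * vnorm (latPt A ζ)) * (vnorm (u (z + ζ) - u z)) ^ 2))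
    ^ ((1 : ℝ) / 2)

namespace WSEaux

open MeasureTheory Real

lemma vnorm_nonneg {n : ℕ} (x : Fin n → ℝ) : 0 ≤ vnorm x := Real.sqrt_nonneg _

lemma vnorm_zero {n : ℕ} : vnorm (0 : Fin n → ℝ) = 0 := by simp [vnorm]

lemma vnorm_eq_norm {n : ℕ} (x : Fin n → ℝ) :
    vnorm x = ‖(WithLp.equiv 2 (Fin n → ℝ)).symm x‖ := by
  rw [EuclideanSpace.norm_eq, vnorm]
  congr 1
  refine Finset.sum_congr rfl fun i _ => ?_
  rw [WithLp.equiv_symm_apply, WithLp.ofLp_toLp, Real.norm_eq_abs, sq_abs]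

lemma vnorm_add_le {n : ℕ} (x y : Fin n → ℝ) : vnorm (x + y) ≤ vnorm x + vnorm y := by
  simp only [vnorm_eq_norm]
  rw [WithLp.equiv_symm_apply, WithLp.toLp_add]
  exact norm_add_le _ _

lemma abs_le_vnorm {n : ℕ} (x : Fin n → ℝ) (i : Fin n) : |x i| ≤ vnorm x := by
  rw [← Real.sqrt_sq_eq_abs]
  exact Real.sqrt_le_sqrt (Finset.single_le_sum (fun j _ => sq_nonneg (x j)) (Finset.mem_univ i))

variable {m d : ℕ}

noncomputable def SQ (u : (Fin m → ℤ) → Fin d → ℝ) (ζ : Fin m → ℤ) : ℝ≥0∞ :=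
  ∑' z : Fin m → ℤ, ENNReal.ofReal ((vnorm (u (z + ζ) - u z)) ^ 2)

noncomputable def Sfull (A : Matrix (Fin m) (Fin m) ℝ) (γ : ℝ)
    (u : (Fin m → ℤ) → Fin d → ℝ) : ℝ≥0∞ :=
  ∑' ζ : Fin m → ℤ, ENNReal.ofReal (Real.exp (-2 * γ * vnorm (latPt A ζ))) * SQ u ζ

lemma normDE_eq (A : Matrix (Fin m) (Fin m) ℝ) (γ : ℝ) (u : (Fin m → ℤ) → Fin d → ℝ) :
    normDE A γ u = Sfull A γ u ^ ((1 : ℝ) / 2) := by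
  rw [normDE]
  congr 1
  have h1 : ∀ (z ζ : Fin m → ℤ),
      ENNReal.ofReal (Real.exp (-2 * γ * vnorm (latPt A ζ)) * (vnorm (u (z + ζ) - u z)) ^ 2)
        = ENNReal.ofReal (Real.exp (-2 * γ * vnorm (latPt A ζ)))
          * ENNReal.ofReal ((vnorm (u (z + ζ) - u z)) ^ 2) :=
    fun z ζ => ENNReal.ofReal_mul (Real.exp_nonneg _)
  simp_rw [h1]
  rw [ENNReal.tsum_comm]
  simp_rw [ENNReal.tsum_mul_left]
  rfl

lemma tsum_minkowski (f g : (Fin m → ℤ) → ℝ) (hf : ∀ z, 0 ≤ f z) (hg : ∀ z, 0 ≤ g z) :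
    (∑' z, ENNReal.ofReal ((f z + g z) ^ 2)) ^ ((1 : ℝ) / 2)
      ≤ (∑' z, ENNReal.ofReal ((f z) ^ 2)) ^ ((1 : ℝ) / 2)
        + (∑' z, ENNReal.ofReal ((g z) ^ 2)) ^ ((1 : ℝ) / 2) := by
  have hsq : ∀ (t : ℝ), 0 ≤ t → ENNReal.ofReal (t ^ 2) = ENNReal.ofReal t ^ (2 : ℝ) := by
    intro t ht
    rw [ENNReal.ofReal_rpow_of_nonneg ht (by norm_num)]
    norm_num
  have key := ENNReal.lintegral_Lp_add_le (p := 2)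
    (μ := (Measure.count : Measure (Fin m → ℤ)))
    (f := fun z => ENNReal.ofReal (f z)) (g := fun z => ENNReal.ofReal (g z))
    (measurable_of_countable _).aemeasurable (measurable_of_countable _).aemeasurable
    one_le_two
  simp only [lintegral_count, Pi.add_apply] at key
  rw [show (∑' z, ENNReal.ofReal ((f z + g z) ^ 2))
        = ∑' z, (ENNReal.ofReal (f z) + ENNReal.ofReal (g z)) ^ (2 : ℝ) from
      tsum_congr fun z => by
        rw [hsq _ (add_nonneg (hf z) (hg z)), ENNReal.ofReal_add (hf z) (hg z)],
    show (∑' z, ENNReal.ofReal ((f z) ^ 2)) = ∑' z, (ENNReal.ofReal (f z)) ^ (2 : ℝ) from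
      tsum_congr fun z => hsq _ (hf z),
    show (∑' z, ENNReal.ofReal ((g z) ^ 2)) = ∑' z, (ENNReal.ofReal (g z)) ^ (2 : ℝ) from
      tsum_congr fun z => hsq _ (hg z)]
  exact key


noncomputable def Gq (u : (Fin m → ℤ) → Fin d → ℝ) (ζ : Fin m → ℤ) : ℝ≥0∞ :=
  SQ u ζ ^ ((1 : ℝ) / 2)

lemma SQ_eq_Gq_sq (u : (Fin m → ℤ) → Fin d → ℝ) (ζ : Fin m → ℤ) :
    SQ u ζ = Gq u ζ ^ (2 : ℝ) := by
  rw [Gq, ← ENNReal.rpow_mul]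
  norm_num

lemma Gq_zero (u : (Fin m → ℤ) → Fin d → ℝ) : Gq u 0 = 0 := by
  have : SQ u 0 = 0 := by
    rw [SQ]
    convert tsum_zero with z
    rw [add_zero, sub_self]
    simp [vnorm]
  rw [Gq, this, ENNReal.zero_rpow_of_pos (by norm_num)]

lemma Gq_add_le (u : (Fin m → ℤ) → Fin d → ℝ) (σ τ : Fin m → ℤ) :
    Gq u (σ + τ) ≤ Gq u σ + Gq u τ := by
  set f : (Fin m → ℤ) → ℝ := fun z => vnorm (u (z + τ + σ) - u (z + τ)) with hf
  set g : (Fin m → ℤ) → ℝ := fun z => vnorm (u (z + τ) - u z) with hg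
  have h1 : SQ u (σ + τ) ≤ ∑' z, ENNReal.ofReal ((f z + g z) ^ 2) := by
    refine ENNReal.tsum_le_tsum fun z => ENNReal.ofReal_le_ofReal ?_
    have harg : z + (σ + τ) = z + τ + σ := by abel
    have hdec : u (z + (σ + τ)) - u z = (u (z + τ + σ) - u (z + τ)) + (u (z + τ) - u z) := by
      rw [harg]; abel
    rw [hdec]
    exact pow_le_pow_left₀ (vnorm_nonneg _) (vnorm_add_le _ _) 2
  have h3 : (∑' z, ENNReal.ofReal ((f z) ^ 2)) = SQ u σ := by
    have := (Equiv.addRight τ).tsum_eq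
      (fun w => ENNReal.ofReal ((vnorm (u (w + σ) - u w)) ^ 2))
    exact this
  have h4 : (∑' z, ENNReal.ofReal ((g z) ^ 2)) = SQ u τ := rfl
  calc Gq u (σ + τ) = SQ u (σ + τ) ^ ((1:ℝ)/2) := rfl
    _ ≤ (∑' z, ENNReal.ofReal ((f z + g z) ^ 2)) ^ ((1:ℝ)/2) :=
        ENNReal.rpow_le_rpow h1 (by norm_num)
    _ ≤ (∑' z, ENNReal.ofReal ((f z) ^ 2)) ^ ((1:ℝ)/2)
          + (∑' z, ENNReal.ofReal ((g z) ^ 2)) ^ ((1:ℝ)/2) :=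
        tsum_minkowski f g (fun z => vnorm_nonneg _) (fun z => vnorm_nonneg _)
    _ = Gq u σ + Gq u τ := by rw [h3, h4]; rfl

set_option maxHeartbeats 1000000 in
lemma Gq_path (u : (Fin m → ℤ) → Fin d → ℝ) (B : ℝ≥0∞)
    (hB : ∀ (i : Fin m) (ε : ℤ), ε = 1 ∨ ε = -1 → Gq u (Pi.single i ε) ≤ B) :
    ∀ (n : ℕ) (ζ : Fin m → ℤ), (∑ i, (ζ i).natAbs) = n → Gq u ζ ≤ (n : ℝ≥0∞) * B := by
  intro n
  induction n with
  | zero =>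
    intro ζ hζ
    have hz : ζ = 0 := by
      funext i
      have := (Finset.sum_eq_zero_iff).mp hζ i (Finset.mem_univ i)
      simpa [Int.natAbs_eq_zero] using this
    simp [hz, Gq_zero]
  | succ n ih =>
    intro ζ hζ
    have hex : ∃ i, ζ i ≠ 0 := by
      by_contra h
      push_neg at h
      simp [h] at hζ
    obtain ⟨i, hi⟩ := hex
    set ε : ℤ := if 0 < ζ i then 1 else -1 with hε
    have hεor : ε = 1 ∨ ε = -1 := by rw [hε]; split <;> simp
    set ζ' : Fin m → ℤ := ζ - Pi.single i ε with hζ'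
    have hζi : ζ' i = ζ i - ε := by simp [hζ']
    have hζj : ∀ j, j ≠ i → ζ' j = ζ j := by
      intro j hj
      simp [hζ', Pi.single_eq_of_ne hj]
    have hsum : (∑ j, (ζ' j).natAbs) = n := by
      have e1 : (∑ j, (ζ' j).natAbs)
          = (ζ' i).natAbs + ∑ j ∈ Finset.univ.erase i, (ζ' j).natAbs :=
        (Finset.add_sum_erase _ _ (Finset.mem_univ i)).symm
      have e2 : (∑ j, (ζ j).natAbs)
          = (ζ i).natAbs + ∑ j ∈ Finset.univ.erase i, (ζ j).natAbs :=
        (Finset.add_sum_erase _ _ (Finset.mem_univ i)).symm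
      have e3 : ∑ j ∈ Finset.univ.erase i, (ζ' j).natAbs
          = ∑ j ∈ Finset.univ.erase i, (ζ j).natAbs :=
        Finset.sum_congr rfl fun j hj => by rw [hζj j (Finset.ne_of_mem_erase hj)]
      have e4 : (ζ' i).natAbs + 1 = (ζ i).natAbs := by
        rw [hζi, hε]
        split <;> rename_i h <;> omega
      rw [e2, ← e3] at hζ
      omega
    have hrec : ζ' + Pi.single i ε = ζ := by rw [hζ']; abel
    have step1 : Gq u ζ ≤ Gq u ζ' + Gq u (Pi.single i ε) := by
      have h := Gq_add_le u ζ' (Pi.single i ε)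
      rwa [hrec] at h
    have step2 : Gq u ζ' + Gq u (Pi.single i ε) ≤ (n : ℝ≥0∞) * B + B :=
      add_le_add (ih ζ' hsum) (hB i ε hεor)
    have step3 : (n : ℝ≥0∞) * B + B = ((n + 1 : ℕ) : ℝ≥0∞) * B := by
      rw [Nat.cast_succ, add_mul, one_mul]
    exact step3 ▸ (step1.trans step2)


lemma step_bound (A : Matrix (Fin m) (Fin m) ℝ) (γ : ℝ) (u : (Fin m → ℤ) → Fin d → ℝ)
    (s : Fin m → ℤ) :
    Gq u s ≤ ENNReal.ofReal (Real.exp (γ * vnorm (latPt A s))) * normDE A γ u := by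
  set v := vnorm (latPt A s) with hv
  have h1 : ENNReal.ofReal (Real.exp (-2 * γ * v)) * SQ u s ≤ Sfull A γ u :=
    ENNReal.le_tsum s
  have h2 : SQ u s ≤ ENNReal.ofReal (Real.exp (2 * γ * v)) * Sfull A γ u := by
    have key : ENNReal.ofReal (Real.exp (2 * γ * v)) * ENNReal.ofReal (Real.exp (-2 * γ * v))
        = 1 := by
      rw [← ENNReal.ofReal_mul (Real.exp_nonneg _), ← Real.exp_add]
      norm_num
    calc SQ u s = (ENNReal.ofReal (Real.exp (2 * γ * v))
          * ENNReal.ofReal (Real.exp (-2 * γ * v))) * SQ u s := by rw [key, one_mul]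
      _ = ENNReal.ofReal (Real.exp (2 * γ * v))
          * (ENNReal.ofReal (Real.exp (-2 * γ * v)) * SQ u s) := by rw [mul_assoc]
      _ ≤ ENNReal.ofReal (Real.exp (2 * γ * v)) * Sfull A γ u :=
          mul_le_mul_right h1 _
  calc Gq u s = SQ u s ^ ((1:ℝ)/2) := rfl
    _ ≤ (ENNReal.ofReal (Real.exp (2 * γ * v)) * Sfull A γ u) ^ ((1:ℝ)/2) :=
        ENNReal.rpow_le_rpow h2 (by norm_num)
    _ = ENNReal.ofReal (Real.exp (2 * γ * v)) ^ ((1:ℝ)/2) * Sfull A γ u ^ ((1:ℝ)/2) :=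
        ENNReal.mul_rpow_of_nonneg _ _ (by norm_num)
    _ = ENNReal.ofReal (Real.exp (γ * v)) * normDE A γ u := by
        rw [normDE_eq, ENNReal.ofReal_rpow_of_nonneg (Real.exp_nonneg _) (by norm_num),
          ← Real.exp_mul, show 2 * γ * v * (1/2) = γ * v by ring]

lemma summable_exp_int {β : ℝ} (hβ : 0 < β) :
    Summable fun a : ℤ => Real.exp (-β * (a.natAbs : ℝ)) := by
  have hnat : Summable fun n : ℕ => Real.exp (-β * (n : ℝ)) := by
    have := Real.summable_exp_nat_mul_iff.mpr (neg_neg_iff_pos.mpr hβ : -β < 0)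
    refine this.congr fun n => ?_
    rw [mul_comm]
  refine Summable.of_nat_of_neg ?_ ?_
  · exact hnat.congr fun n => by simp
  · exact hnat.congr fun n => by simp

lemma expsum_ne_top : ∀ (k : ℕ) {β : ℝ}, 0 < β →
    (∑' ζ : Fin k → ℤ, ENNReal.ofReal (Real.exp (-β * ∑ i, ((ζ i).natAbs : ℝ)))) ≠ ⊤ := by
  intro k
  induction k with
  | zero =>
    intro β hβ
    rw [tsum_fintype]
    exact (ENNReal.sum_lt_top.mpr fun a _ => ENNReal.ofReal_lt_top).ne
  | succ k ih =>
    intro β hβ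
    rw [← (Fin.consEquiv fun _ : Fin (k + 1) => ℤ).tsum_eq, ENNReal.tsum_prod']
    have hterm : ∀ (a : ℤ) (b : Fin k → ℤ),
        ENNReal.ofReal (Real.exp (-β * ∑ i, ((((Fin.consEquiv fun _ : Fin (k + 1) => ℤ) (a, b)) i).natAbs : ℝ)))
          = ENNReal.ofReal (Real.exp (-β * (a.natAbs : ℝ)))
            * ENNReal.ofReal (Real.exp (-β * ∑ i, ((b i).natAbs : ℝ))) := by
      intro a b
      have harg : (-β * ∑ i, ((((Fin.consEquiv fun _ : Fin (k + 1) => ℤ) (a, b)) i).natAbs : ℝ))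
          = (-β * (a.natAbs : ℝ)) + (-β * ∑ i, ((b i).natAbs : ℝ)) := by
        rw [← mul_add]
        congr 1
        rw [Fin.sum_univ_succ]
        simp [Fin.consEquiv]
      rw [harg, Real.exp_add, ENNReal.ofReal_mul (Real.exp_nonneg _)]
    have h3 : (∑' (a : ℤ) (b : Fin k → ℤ), ENNReal.ofReal
          (Real.exp (-β * ∑ i, ((((Fin.consEquiv fun _ : Fin (k + 1) => ℤ) (a, b)) i).natAbs : ℝ))))
        = (∑' a : ℤ, ENNReal.ofReal (Real.exp (-β * (a.natAbs : ℝ))))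
          * (∑' b : Fin k → ℤ, ENNReal.ofReal (Real.exp (-β * ∑ i, ((b i).natAbs : ℝ)))) := by
      rw [← ENNReal.tsum_mul_right]
      refine tsum_congr fun a => ?_
      rw [← ENNReal.tsum_mul_left]
      exact tsum_congr fun b => hterm a b
    rw [h3]
    refine ENNReal.mul_ne_top ?_ (ih hβ)
    rw [← ENNReal.ofReal_tsum_of_nonneg (fun a => Real.exp_nonneg _) (summable_exp_int hβ)]
    exact ENNReal.ofReal_ne_top

lemma quad_bound {α : ℝ} (hα : 0 < α) (t : ℝ) (ht : 0 ≤ t) :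
    t ^ 2 * Real.exp (-α * t) ≤ (16 / α ^ 2) * Real.exp (-(α / 2) * t) := by
  have h1 : α * t / 4 ≤ Real.exp (α * t / 4) :=
    le_trans (by linarith) (Real.add_one_le_exp _)
  have h2 : (α * t / 4) ^ 2 ≤ Real.exp (α * t / 4) ^ 2 :=
    pow_le_pow_left₀ (by positivity) h1 2
  have h3 : Real.exp (α * t / 4) ^ 2 = Real.exp (α * t / 2) := by
    rw [sq, ← Real.exp_add]
    congr 1
    ring
  have hE : (α * t / 4) ^ 2 ≤ Real.exp (α * t / 2) := h3 ▸ h2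
  have ht2 : t ^ 2 ≤ 16 / α ^ 2 * Real.exp (α * t / 2) := by
    have hα2 : 0 < α ^ 2 := by positivity
    have h4 : α ^ 2 * t ^ 2 ≤ 16 * Real.exp (α * t / 2) := by nlinarith [hE]
    rw [div_mul_eq_mul_div, le_div_iff₀ hα2]
    linarith [h4]
  calc t ^ 2 * Real.exp (-α * t)
      ≤ (16 / α ^ 2 * Real.exp (α * t / 2)) * Real.exp (-α * t) :=
        mul_le_mul_of_nonneg_right ht2 (Real.exp_pos _).le
    _ = 16 / α ^ 2 * Real.exp (-(α / 2) * t) := by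
        rw [mul_assoc, ← Real.exp_add]
        congr 2
        ring


lemma normDE_m0 {d : ℕ} (A : Matrix (Fin 0) (Fin 0) ℝ) (γ : ℝ)
    (u : (Fin 0 → ℤ) → Fin d → ℝ) : normDE A γ u = 0 := by
  rw [normDE]
  have h : ∀ z ζ : Fin 0 → ℤ, u (z + ζ) - u z = 0 := fun z ζ => by
    rw [Subsingleton.elim (z + ζ) z, sub_self]
  have h2 : ∀ z ζ : Fin 0 → ℤ,
      ENNReal.ofReal (Real.exp (-2 * γ * vnorm (latPt A ζ)) * (vnorm (u (z + ζ) - u z)) ^ 2)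
        = 0 := by
    intro z ζ
    rw [h, vnorm_zero]
    norm_num
  simp only [h2, tsum_zero]
  rw [ENNReal.zero_rpow_of_pos (by norm_num)]

lemma oneside {m d : ℕ} (A : Matrix (Fin m) (Fin m) ℝ) (hA : IsUnit A) {γ₁ γ₂ : ℝ}
    (hγ₁ : 0 < γ₁) (hγ₂ : 0 < γ₂) :
    ∃ C : ℝ, 0 < C ∧ ∀ u : (Fin m → ℤ) → Fin d → ℝ,
      normDE A γ₁ u ≤ ENNReal.ofReal C * normDE A γ₂ u := by
  rcases Nat.eq_zero_or_pos m with hm | hm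
  · subst hm
    exact ⟨1, one_pos, fun u => by rw [normDE_m0, normDE_m0]; simp⟩
  set B := A⁻¹ with hBdef
  have hdet : IsUnit A.det := (Matrix.isUnit_iff_isUnit_det A).mp hA
  have hBA : B * A = 1 := Matrix.nonsing_inv_mul A hdet
  set B₀ : ℝ := ∑ i, ∑ j, |B i j| with hB₀def
  have hB₀nonneg : 0 ≤ B₀ :=
    Finset.sum_nonneg fun i _ => Finset.sum_nonneg fun j _ => abs_nonneg _
  have hBne : B ≠ 0 := by
    intro h
    rw [h, Matrix.zero_mul] at hBA
    have h1 := congrFun (congrFun hBA ⟨0, hm⟩) ⟨0, hm⟩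
    simp [Matrix.one_apply] at h1
  have hB₀pos : 0 < B₀ := by
    rcases hB₀nonneg.lt_or_eq with h | h
    · exact h
    · exfalso
      apply hBne
      ext i j
      have h0 := (Finset.sum_eq_zero_iff_of_nonneg
        (fun i _ => Finset.sum_nonneg fun j _ => abs_nonneg _)).mp h.symm i (Finset.mem_univ i)
      have h1 := (Finset.sum_eq_zero_iff_of_nonneg (fun j _ => abs_nonneg _)).mp h0 j
        (Finset.mem_univ j)
      simpa [abs_eq_zero] using h1
  have hcoord : ∀ ζ : Fin m → ℤ, (∑ i, ((ζ i).natAbs : ℝ)) ≤ B₀ * vnorm (latPt A ζ) := by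
    intro ζ
    set w := latPt A ζ with hw
    have hrecv : ∀ i, ((ζ i : ℝ)) = B.mulVec w i := by
      intro i
      rw [hw, latPt, Matrix.mulVec_mulVec, hBA, Matrix.one_mulVec]
    calc ∑ i, ((ζ i).natAbs : ℝ) = ∑ i, |(ζ i : ℝ)| := by
          exact Finset.sum_congr rfl fun i _ => by rw [Nat.cast_natAbs, Int.cast_abs]
      _ ≤ ∑ i, (∑ j, |B i j|) * vnorm w := by
          refine Finset.sum_le_sum fun i _ => ?_
          rw [hrecv i]
          have e1 : B.mulVec w i = ∑ j, B i j * w j := by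
            simp [Matrix.mulVec, dotProduct]
          rw [e1]
          calc |∑ j, B i j * w j| ≤ ∑ j, |B i j * w j| := Finset.abs_sum_le_sum_abs _ _
            _ ≤ ∑ j, |B i j| * vnorm w := by
                refine Finset.sum_le_sum fun j _ => ?_
                rw [abs_mul]
                exact mul_le_mul_of_nonneg_left (abs_le_vnorm w j) (abs_nonneg _)
            _ = (∑ j, |B i j|) * vnorm w := (Finset.sum_mul _ _ _).symm
      _ = B₀ * vnorm w := (Finset.sum_mul _ _ _).symm
  set α : ℝ := 2 * γ₁ / B₀ with hα
  have hαpos : 0 < α := by positivity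
  have hαB : α * B₀ = 2 * γ₁ := div_mul_cancel₀ _ hB₀pos.ne'
  set M : ℝ := ∑ j, (vnorm (latPt A (Pi.single j 1)) + vnorm (latPt A (Pi.single j (-1))))
    with hM
  have hMb : ∀ (i : Fin m) (ε : ℤ), ε = 1 ∨ ε = -1 → vnorm (latPt A (Pi.single i ε)) ≤ M := by
    intro i ε hε
    have hterm : vnorm (latPt A (Pi.single i ε))
        ≤ vnorm (latPt A (Pi.single i 1)) + vnorm (latPt A (Pi.single i (-1))) := by
      rcases hε with h | h <;> subst h
      · exact le_add_of_nonneg_right (vnorm_nonneg _)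
      · exact le_add_of_nonneg_left (vnorm_nonneg _)
    exact hterm.trans (Finset.single_le_sum
      (f := fun j => vnorm (latPt A (Pi.single j 1)) + vnorm (latPt A (Pi.single j (-1))))
      (fun j _ => add_nonneg (vnorm_nonneg _) (vnorm_nonneg _)) (Finset.mem_univ i))
  set K : ℝ≥0∞ := ∑' ζ : Fin m → ℤ,
    ENNReal.ofReal ((∑ i, ((ζ i).natAbs : ℝ)) ^ 2 * Real.exp (-2 * γ₁ * vnorm (latPt A ζ)))
    with hK
  have hKfin : K ≠ ⊤ := by
    have hle : K ≤ ENNReal.ofReal (16 / α ^ 2)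
        * ∑' ζ : Fin m → ℤ, ENNReal.ofReal (Real.exp (-(α/2) * ∑ i, ((ζ i).natAbs : ℝ))) := by
      rw [hK, ← ENNReal.tsum_mul_left]
      refine ENNReal.tsum_le_tsum fun ζ => ?_
      rw [← ENNReal.ofReal_mul (by positivity)]
      refine ENNReal.ofReal_le_ofReal ?_
      set t : ℝ := ∑ i, ((ζ i).natAbs : ℝ) with htd
      have htnn : 0 ≤ t := Finset.sum_nonneg fun i _ => Nat.cast_nonneg _
      have h1 : Real.exp (-2 * γ₁ * vnorm (latPt A ζ)) ≤ Real.exp (-α * t) := by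
        apply Real.exp_le_exp.mpr
        have hc := hcoord ζ
        rw [← htd] at hc
        have hc' := mul_le_mul_of_nonneg_left hc hαpos.le
        have h2 : α * (B₀ * vnorm (latPt A ζ)) = 2 * γ₁ * vnorm (latPt A ζ) := by
          rw [← mul_assoc, hαB]
        linarith
      calc t ^ 2 * Real.exp (-2 * γ₁ * vnorm (latPt A ζ))
          ≤ t ^ 2 * Real.exp (-α * t) := mul_le_mul_of_nonneg_left h1 (by positivity)
        _ ≤ 16 / α ^ 2 * Real.exp (-(α/2) * t) := quad_bound hαpos t htnn
    exact ne_top_of_le_ne_top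
      (ENNReal.mul_ne_top ENNReal.ofReal_ne_top (expsum_ne_top m (by positivity))) hle
  refine ⟨(Real.sqrt K.toReal + 1) * Real.exp (γ₂ * M), by positivity, fun u => ?_⟩
  set N₂ := normDE A γ₂ u with hN₂
  set Bst : ℝ≥0∞ := ENNReal.ofReal (Real.exp (γ₂ * M)) * N₂ with hBst
  have hstep : ∀ (i : Fin m) (ε : ℤ), ε = 1 ∨ ε = -1 → Gq u (Pi.single i ε) ≤ Bst := by
    intro i ε hε
    refine (step_bound A γ₂ u (Pi.single i ε)).trans ?_
    exact mul_le_mul_left (ENNReal.ofReal_le_ofReal (Real.exp_le_exp.mpr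
      (mul_le_mul_of_nonneg_left (hMb i ε hε) hγ₂.le))) _
  have hpath : ∀ ζ : Fin m → ℤ, Gq u ζ ≤ ((∑ i, (ζ i).natAbs : ℕ) : ℝ≥0∞) * Bst :=
    fun ζ => Gq_path u Bst hstep _ ζ rfl
  have hS : Sfull A γ₁ u ≤ K * Bst ^ (2 : ℝ) := by
    rw [hK, ← ENNReal.tsum_mul_right]
    refine ENNReal.tsum_le_tsum fun ζ => ?_
    have hSQ : SQ u ζ ≤ (((∑ i, (ζ i).natAbs : ℕ) : ℝ≥0∞) * Bst) ^ (2 : ℝ) := by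
      rw [SQ_eq_Gq_sq]
      exact ENNReal.rpow_le_rpow (hpath ζ) (by norm_num)
    have hn : (((∑ i, (ζ i).natAbs : ℕ) : ℝ≥0∞)) ^ (2 : ℝ)
        = ENNReal.ofReal ((∑ i, ((ζ i).natAbs : ℝ)) ^ 2) := by
      rw [← ENNReal.ofReal_natCast (∑ i, (ζ i).natAbs),
        ENNReal.ofReal_rpow_of_nonneg (Nat.cast_nonneg _) (by norm_num)]
      congr 1
      rw [show ((2:ℝ)) = ((2:ℕ) : ℝ) by norm_num, Real.rpow_natCast, Nat.cast_sum]
    calc ENNReal.ofReal (Real.exp (-2 * γ₁ * vnorm (latPt A ζ))) * SQ u ζ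
        ≤ ENNReal.ofReal (Real.exp (-2 * γ₁ * vnorm (latPt A ζ)))
            * ((((∑ i, (ζ i).natAbs : ℕ)) : ℝ≥0∞) * Bst) ^ (2 : ℝ) := mul_le_mul_right hSQ _
      _ = ENNReal.ofReal ((∑ i, ((ζ i).natAbs : ℝ)) ^ 2
            * Real.exp (-2 * γ₁ * vnorm (latPt A ζ))) * Bst ^ (2 : ℝ) := by
          rw [ENNReal.mul_rpow_of_nonneg _ _ (by norm_num : (0:ℝ) ≤ 2), hn, ← mul_assoc,
            ← ENNReal.ofReal_mul (Real.exp_nonneg _), mul_comm (Real.exp _)]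
  have hN₁ : normDE A γ₁ u ≤ K ^ ((1:ℝ)/2) * Bst := by
    rw [normDE_eq]
    calc Sfull A γ₁ u ^ ((1:ℝ)/2) ≤ (K * Bst ^ (2:ℝ)) ^ ((1:ℝ)/2) :=
        ENNReal.rpow_le_rpow hS (by norm_num)
      _ = K ^ ((1:ℝ)/2) * Bst := by
          rw [ENNReal.mul_rpow_of_nonneg _ _ (by norm_num : (0:ℝ) ≤ (1:ℝ)/2),
            ← ENNReal.rpow_mul]
          norm_num
  refine hN₁.trans ?_
  have hKsq : K ^ ((1:ℝ)/2) ≤ ENNReal.ofReal (Real.sqrt K.toReal + 1) := by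
    conv_lhs => rw [← ENNReal.ofReal_toReal hKfin]
    rw [ENNReal.ofReal_rpow_of_nonneg ENNReal.toReal_nonneg (by norm_num)]
    refine ENNReal.ofReal_le_ofReal ?_
    rw [← Real.sqrt_eq_rpow]
    linarith
  calc K ^ ((1:ℝ)/2) * Bst ≤ ENNReal.ofReal (Real.sqrt K.toReal + 1) * Bst :=
      mul_le_mul_left hKsq _
    _ = ENNReal.ofReal ((Real.sqrt K.toReal + 1) * Real.exp (γ₂ * M)) * N₂ := by
        rw [hBst, ← mul_assoc, ← ENNReal.ofReal_mul (by positivity)]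

end WSEaux

/-- equivalence of the weighted semi-norms `‖·‖_{ℓ²_{γ₁}}` and
`‖·‖_{ℓ²_{γ₂}}` for any `γ₁, γ₂ > 0` on a Bravais lattice `Λ = Aℤ^m`. -/
theorem weighted_seminorm_equivalence
    (m d : ℕ) (A : Matrix (Fin m) (Fin m) ℝ) (hA : IsUnit A)
    (γ₁ γ₂ : ℝ) (hγ₁ : 0 < γ₁) (hγ₂ : 0 < γ₂) :
    ∃ c C : ℝ, 0 < c ∧ 0 < C ∧
      ∀ u : (Fin m → ℤ) → Fin d → ℝ,
        ENNReal.ofReal c * normDE A γ₂ u ≤ normDE A γ₁ u ∧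
        normDE A γ₁ u ≤ ENNReal.ofReal C * normDE A γ₂ u := by
  obtain ⟨C, hC, hCu⟩ := WSEaux.oneside (d := d) A hA hγ₁ hγ₂
  obtain ⟨C', hC', hC'u⟩ := WSEaux.oneside (d := d) A hA hγ₂ hγ₁
  refine ⟨1 / C', C, by positivity, hC, fun u => ⟨?_, hCu u⟩⟩
  calc ENNReal.ofReal (1 / C') * normDE A γ₂ u
      ≤ ENNReal.ofReal (1 / C') * (ENNReal.ofReal C' * normDE A γ₁ u) :=
        mul_le_mul_right (hC'u u) _
    _ = ENNReal.ofReal (1 / C' * C') * normDE A γ₁ u := by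
        rw [← mul_assoc, ← ENNReal.ofReal_mul (by positivity)]
    _ = normDE A γ₁ u := by
        rw [one_div_mul_cancel hC'.ne']
        simp
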